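/- Let (R, m) be a Noetherian local ring and let I be a regular ideal of R (an ideal containing a non-zerodivisor) with h(I) < ∞. If J is a partial trace ideal of I, then J is isomorphic to I as an R-module. -/

import Mathlib

noncomputable def modLength (R M : Type*) [CommRing R] [AddCommGroup M] [Module R M] : ℕ∞ :=
  ⨆ s : RelSeries {(x, y) : Submodule R M × Submodule R M | x < y}, (s.length : ℕ∞)

noncomputable def hInv (R M : Type*) [CommRing R] [AddCommGroup M] [Module R M] : ℕ∞ :=
  ⨅ f : M →ₗ[R] R, modLength R (R ⧸ LinearMap.range f)

section Aux

variable {R M : Type*} [CommRing R] [AddCommGroup M] [Module R M]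

lemma le_modLength (s : RelSeries {(x, y) : Submodule R M × Submodule R M | x < y}) :
    (s.length : ℕ∞) ≤ modLength R M :=
  le_iSup (fun s : RelSeries {(x, y) : Submodule R M × Submodule R M | x < y} =>
    (s.length : ℕ∞)) s

lemma modLength_eq_zero_of_subsingleton [Subsingleton M] : modLength R M = 0 := by
  refine le_antisymm (iSup_le fun s => ?_) zero_le
  have : s.length = 0 := by
    by_contra h
    have h1 : s.toFun ⟨0, by omega⟩ < s.toFun ⟨1, by omega⟩ := by
      have := s.step ⟨0, by omega⟩
      exact this
    exact absurd (Subsingleton.elim _ _) h1.ne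
  simp [this]

lemma one_le_modLength_of_lt {p q : Submodule R M} (h : p < q) : 1 ≤ modLength R M := by
  let s : RelSeries {(x, y) : Submodule R M × Submodule R M | x < y} :=
    ⟨1, fun i => if i.val = 0 then p else q, fun i => by
      fin_cases i
      simpa using h⟩
  have hs := le_modLength s
  simpa [s] using hs

end Aux

lemma pow_maximalIdeal_le (R : Type*) [CommRing R] [IsNoetherianRing R] [IsLocalRing R]
    (J : Ideal R) (hfin : modLength R (R ⧸ J) < ⊤) :
    ∃ n, IsLocalRing.maximalIdeal R ^ n ≤ J := by
  set m := IsLocalRing.maximalIdeal R with hm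
  set P : ℕ → Submodule R (R ⧸ J) :=
    fun k => Submodule.map J.mkQ (m ^ k) with hP
  by_cases h : ∃ k, P (k + 1) = P k
  · obtain ⟨k, hk⟩ := h
    refine ⟨k, ?_⟩
    have hfg : (P k).FG := Submodule.FG.map _ (IsNoetherian.noetherian (m ^ k))
    have hbot : P k = ⊥ := by
      refine Submodule.eq_bot_of_le_smul_of_le_jacobson_bot m (P k) hfg ?_ ?_
      · have heq : m • P k = P (k + 1) := by
          rw [hP]
          simp only
          rw [← Submodule.map_smul'', smul_eq_mul, ← pow_succ']
        rw [heq, hk]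
      · rw [IsLocalRing.jacobson_eq_maximalIdeal ⊥ bot_ne_top]
    intro y hy
    have hmem : J.mkQ y ∈ P k := Submodule.mem_map_of_mem (f := J.mkQ) hy
    rw [hbot, Submodule.mem_bot] at hmem
    rwa [Submodule.mkQ_apply, Submodule.Quotient.mk_eq_zero] at hmem
  · exfalso
    push_neg at h
    have hstrict : ∀ k, P (k + 1) < P k := fun k =>
      lt_of_le_of_ne (Submodule.map_mono (Ideal.pow_le_pow_right k.le_succ)) (h k)
    have hbig : ∀ n : ℕ, (n : ℕ∞) ≤ modLength R (R ⧸ J) := by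
      intro n
      let s : RelSeries {(x, y) : Submodule R (R ⧸ J) × Submodule R (R ⧸ J) | x < y} :=
        ⟨n, fun i => P (n - i.val), fun i => by
          have h1 : n - (i.val + 1) + 1 = n - i.val := by omega
          have h2 := hstrict (n - (i.val + 1))
          rw [h1] at h2
          simpa using h2⟩
      have hs := le_modLength s
      simpa [s] using hs
    have hne := hfin.ne
    have hcoe := ENat.coe_toNat hne
    have hle := hbig ((modLength R (R ⧸ J)).toNat + 1)
    rw [← hcoe] at hle
    exact absurd hle (by exact_mod_cast Nat.not_succ_le_self _)

/-- Let `(R, m)` be a Noetherian local ring and `I` a regular ideal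
(an ideal containing a non-zerodivisor) with `h(I) < ∞`.  If `J` is a partial trace ideal
of `I` (that is, `J = Im f` for some `f : I → R` with `ℓ_R(R/J) = h(I)`), then `J ≅ I`
as `R`-modules. -/
theorem stmt4 (R : Type*) [CommRing R] [IsNoetherianRing R] [IsLocalRing R]
    (I : Ideal R) (hreg : ∃ x ∈ I, x ∈ nonZeroDivisors R)
    (hfin : hInv R ↥I < ⊤)
    (J : Ideal R) (f : ↥I →ₗ[R] R) (hf : LinearMap.range f = J)
    (hJ : modLength R (R ⧸ J) = hInv R ↥I) :
    Nonempty (↥J ≃ₗ[R] ↥I) := by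
  obtain ⟨x, hxI, hx⟩ := hreg
  have hflen : modLength R (R ⧸ J) < ⊤ := by rw [hJ]; exact hfin
  have htEx : ∃ t ∈ J, t ∈ nonZeroDivisors R := by
    by_cases hJtop : J = ⊤
    · exact ⟨1, by simp [hJtop], one_mem _⟩
    · obtain ⟨n, hn⟩ := pow_maximalIdeal_le R J hflen
      have hxm : x ∈ IsLocalRing.maximalIdeal R := by
        by_contra hxm
        have hxu : IsUnit x := by
          by_contra hxu
          exact hxm ((IsLocalRing.mem_maximalIdeal x).mpr (mem_nonunits_iff.mpr hxu))
        have hI : I = ⊤ := Ideal.eq_top_of_isUnit_mem I hxI hxu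
        have hsub : Subsingleton (R ⧸ LinearMap.range I.subtype) := by
          rw [Submodule.range_subtype, hI]
          exact Submodule.Quotient.subsingleton_iff.mpr rfl
        have h0 : hInv R ↥I ≤ 0 := by
          have hle := iInf_le
            (fun g : ↥I →ₗ[R] R => modLength R (R ⧸ LinearMap.range g)) I.subtype
          rwa [modLength_eq_zero_of_subsingleton] at hle
        have hJ0 : modLength R (R ⧸ J) = 0 := le_antisymm (hJ ▸ h0) zero_le
        have hnt : Nontrivial (R ⧸ J) :=
          Submodule.Quotient.nontrivial_iff.mpr (lt_top_iff_ne_top.mpr hJtop).ne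
        have hnt2 : Nontrivial (Submodule R (R ⧸ J)) := (Submodule.nontrivial_iff R).mpr hnt
        have hone := one_le_modLength_of_lt (bot_lt_top : (⊥ : Submodule R (R ⧸ J)) < ⊤)
        rw [hJ0] at hone
        exact absurd hone (by simp)
      exact ⟨x ^ n, hn (Ideal.pow_mem_pow hxm n), pow_mem hx n⟩
  obtain ⟨t, htJ, ht⟩ := htEx
  have hinj : Function.Injective f := by
    rw [← LinearMap.ker_eq_bot, eq_bot_iff]
    rintro z hz
    rw [LinearMap.mem_ker] at hz
    obtain ⟨w, hw⟩ : t ∈ LinearMap.range f := by rw [hf]; exact htJ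
    have h1 : (z : R) • w = (w : R) • z := Subtype.ext (by simp [mul_comm])
    have key : (z : R) * t = 0 := by
      calc (z : R) * t = (z : R) • f w := by rw [hw, smul_eq_mul]
        _ = f ((z : R) • w) := (f.map_smul _ _).symm
        _ = f ((w : R) • z) := by rw [h1]
        _ = (w : R) • f z := f.map_smul _ _
        _ = 0 := by rw [hz, smul_zero]
    have hz0 : (z : R) = 0 := (mul_right_mem_nonZeroDivisors_eq_zero_iff ht).mp key
    simpa using Subtype.ext hz0
  exact ⟨((LinearEquiv.ofInjective f hinj).trans (LinearEquiv.ofEq _ _ hf)).symm⟩
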